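/- The vectorial distance d⃗ on positive definite matrices satisfies d⃗(p₁,q₁) = d⃗(p₂,q₂) if and only if there exists an invertible matrix g with g p₁ gᵀ = p₂ and g q₁ gᵀ = q₂. -/

import Mathlib

open Matrix

noncomputable section

variable {n : ℕ}

/-- The `t`-th power of a symmetric matrix, defined via the spectral decomposition
(junk value if the matrix is not symmetric). -/
noncomputable def mpow (A : Matrix (Fin n) (Fin n) ℝ) (t : ℝ) : Matrix (Fin n) (Fin n) ℝ :=
  if h : A.IsHermitian then
    (h.eigenvectorUnitary : Matrix (Fin n) (Fin n) ℝ) *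
      Matrix.diagonal (fun i => (h.eigenvalues i) ^ t) *
      (star (h.eigenvectorUnitary : Matrix (Fin n) (Fin n) ℝ))
  else A

/-- Eigenvalues of a symmetric matrix, listed in nonincreasing order
(junk value `0` if the matrix is not symmetric). -/
noncomputable def eigsDesc (A : Matrix (Fin n) (Fin n) ℝ) : Fin n → ℝ :=
  if h : A.IsHermitian then fun i => h.eigenvalues (Tuple.sort h.eigenvalues i.rev) else 0

/-- Singular values of a square real matrix, in nonincreasing order. -/
noncomputable def svals (g : Matrix (Fin n) (Fin n) ℝ) : Fin n → ℝ :=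
  fun i => Real.sqrt (eigsDesc (gᵀ * g) i)

/-- The vector `σ⃗(g)` of base-2 logarithms of the singular values of `g`,
in nonincreasing order. -/
noncomputable def sigmaVec (g : Matrix (Fin n) (Fin n) ℝ) : Fin n → ℝ :=
  fun i => Real.logb 2 (svals g i)

/-- The vectorial distance `d⃗(p,q) = 2 σ⃗(p^{-1/2} q^{1/2})`. -/
noncomputable def vecd (p q : Matrix (Fin n) (Fin n) ℝ) : Fin n → ℝ :=
  fun i => 2 * sigmaVec (mpow p (-(1/2)) * mpow q (1/2)) i

/-- Partial sum of the first `k` components of a vector in `ℝⁿ`. -/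
noncomputable def psum (ξ : Fin n → ℝ) (k : ℕ) : ℝ :=
  ∑ i ∈ Finset.univ.filter (fun i : Fin n => (i : ℕ) < k), ξ i

/-- The majorization-type partial order `⪯` on `ℝⁿ`: all partial sums are compared,
with equality of the total sums. -/
def maj (ξ η : Fin n → ℝ) : Prop :=
  (∀ k : ℕ, k < n → psum ξ k ≤ psum η k) ∧ psum ξ n = psum η n

/-- The geodesic `p #_t q = p^{1/2} (p^{-1/2} q p^{-1/2})^t p^{1/2}` in the trace metric
on positive definite matrices. -/
noncomputable def geo (p q : Matrix (Fin n) (Fin n) ℝ) (t : ℝ) : Matrix (Fin n) (Fin n) ℝ :=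
  mpow p (1/2) * mpow (mpow p (-(1/2)) * q * mpow p (-(1/2))) t * mpow p (1/2)

/-- The Riemannian (trace-metric) distance on positive definite matrices, expressed as the
Euclidean norm of the vector of base-2 logarithms of the eigenvalues of `p^{-1/2} q p^{-1/2}`. -/
noncomputable def rdist (p q : Matrix (Fin n) (Fin n) ℝ) : ℝ :=
  Real.sqrt (∑ i : Fin n,
    (Real.logb 2 (eigsDesc (mpow p (-(1/2)) * q * mpow p (-(1/2))) i)) ^ 2)


section Aux

open Polynomial

lemma aux_unit {a b : Matrix (Fin n) (Fin n) ℝ} (h1 : a * b = 1) (h2 : b * a = 1) : IsUnit a :=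
  ⟨⟨a, b, h1, h2⟩, rfl⟩

lemma aux_star_eq_transpose (A : Matrix (Fin n) (Fin n) ℝ) : star A = Aᵀ := by
  rw [Matrix.star_eq_conjTranspose, Matrix.conjTranspose_eq_transpose_of_trivial]

lemma aux_charmatrix_conj {s : Matrix (Fin n) (Fin n) ℝ} (A : Matrix (Fin n) (Fin n) ℝ)
    (hs : IsUnit s) :
    charmatrix (s * A * s⁻¹) =
      (C : ℝ →+* ℝ[X]).mapMatrix s * charmatrix A * (C : ℝ →+* ℝ[X]).mapMatrix s⁻¹ := by
  have h1 : s * s⁻¹ = 1 := Matrix.mul_nonsing_inv s ((Matrix.isUnit_iff_isUnit_det s).mp hs)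
  set m : Matrix (Fin n) (Fin n) ℝ →+* Matrix (Fin n) (Fin n) ℝ[X] := (C : ℝ →+* ℝ[X]).mapMatrix with hm
  have hc : m s * Matrix.scalar (Fin n) (X : ℝ[X]) = Matrix.scalar (Fin n) (X : ℝ[X]) * m s :=
    (Matrix.scalar_commute X (fun r => Commute.all X r) (m s)).eq.symm
  have : m s * charmatrix A * m s⁻¹
      = Matrix.scalar (Fin n) (X : ℝ[X]) * (m s * m s⁻¹) - m s * m A * m s⁻¹ := by
    rw [charmatrix]
    rw [mul_sub, sub_mul]
    rw [← mul_assoc, hc]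
  rw [this, ← _root_.map_mul, h1, _root_.map_one, mul_one, charmatrix]
  congr 1
  rw [← _root_.map_mul, ← _root_.map_mul]

lemma aux_charpoly_conj {s : Matrix (Fin n) (Fin n) ℝ} (A : Matrix (Fin n) (Fin n) ℝ)
    (hs : IsUnit s) : (s * A * s⁻¹).charpoly = A.charpoly := by
  have h1 : s * s⁻¹ = 1 := Matrix.mul_nonsing_inv s ((Matrix.isUnit_iff_isUnit_det s).mp hs)
  set m : Matrix (Fin n) (Fin n) ℝ →+* Matrix (Fin n) (Fin n) ℝ[X] := (C : ℝ →+* ℝ[X]).mapMatrix with hm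
  have key : det (m s) * det (m s⁻¹) = 1 := by
    rw [← det_mul, ← _root_.map_mul, h1, _root_.map_one, det_one]
  unfold Matrix.charpoly
  rw [aux_charmatrix_conj A hs]
  rw [det_mul, det_mul]
  calc det (m s) * det (charmatrix A) * det (m s⁻¹)
      = det (m s) * det (m s⁻¹) * det (charmatrix A) := by ring
    _ = det (charmatrix A) := by rw [key, one_mul]

lemma aux_charpoly_mul_comm {v : Matrix (Fin n) (Fin n) ℝ} (w : Matrix (Fin n) (Fin n) ℝ)
    (hv : IsUnit v) : (v * w).charpoly = (w * v).charpoly := by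
  have h1 : v * v⁻¹ = 1 := Matrix.mul_nonsing_inv v ((Matrix.isUnit_iff_isUnit_det v).mp hv)
  have : v * w = v * (w * v) * v⁻¹ := by
    rw [← mul_assoc, mul_assoc (v * w) v v⁻¹, h1, mul_one]
  rw [this, aux_charpoly_conj _ hv]

lemma aux_charpoly_diagonal (d : Fin n → ℝ) :
    (Matrix.diagonal d).charpoly = ∏ i, (X - C (d i)) := by
  unfold Matrix.charpoly
  have : charmatrix (Matrix.diagonal d) = Matrix.diagonal fun i => X - C (d i) := by
    ext i j
    by_cases h : i = j
    · subst h; simp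
    · rw [charmatrix_apply_ne _ _ _ h, Matrix.diagonal_apply_ne _ h,
        Matrix.diagonal_apply_ne _ h, map_zero, neg_zero]
  rw [this, det_diagonal]


lemma aux_spectral {A : Matrix (Fin n) (Fin n) ℝ} (hA : A.IsHermitian) :
    A = (hA.eigenvectorUnitary : Matrix (Fin n) (Fin n) ℝ) * Matrix.diagonal hA.eigenvalues *
      star (hA.eigenvectorUnitary : Matrix (Fin n) (Fin n) ℝ) := by
  have := hA.spectral_theorem
  rwa [RCLike.ofReal_real_eq_id, Function.id_comp] at this

lemma aux_U_mul_star {A : Matrix (Fin n) (Fin n) ℝ} (hA : A.IsHermitian) :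
    (hA.eigenvectorUnitary : Matrix (Fin n) (Fin n) ℝ) *
      star (hA.eigenvectorUnitary : Matrix (Fin n) (Fin n) ℝ) = 1 :=
  (Matrix.mem_unitaryGroup_iff).mp hA.eigenvectorUnitary.2

lemma aux_star_mul_U {A : Matrix (Fin n) (Fin n) ℝ} (hA : A.IsHermitian) :
    star (hA.eigenvectorUnitary : Matrix (Fin n) (Fin n) ℝ) *
      (hA.eigenvectorUnitary : Matrix (Fin n) (Fin n) ℝ) = 1 :=
  (Matrix.mem_unitaryGroup_iff').mp hA.eigenvectorUnitary.2

lemma aux_charpoly_hermitian {A : Matrix (Fin n) (Fin n) ℝ} (hA : A.IsHermitian) :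
    A.charpoly = ∏ i, (X - C (hA.eigenvalues i)) := by
  set U : Matrix (Fin n) (Fin n) ℝ := (hA.eigenvectorUnitary : Matrix (Fin n) (Fin n) ℝ) with hU
  have hU1 : U * star U = 1 := aux_U_mul_star hA
  have hU2 : star U * U = 1 := aux_star_mul_U hA
  have hUu : IsUnit U := aux_unit hU1 hU2
  have hinv : U⁻¹ = star U := Matrix.inv_eq_right_inv hU1
  have hAeq : A = U * Matrix.diagonal hA.eigenvalues * U⁻¹ := by
    rw [hinv]; exact aux_spectral hA
  conv_lhs => rw [hAeq]
  rw [aux_charpoly_conj _ hUu, aux_charpoly_diagonal]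

lemma aux_roots_charpoly {A : Matrix (Fin n) (Fin n) ℝ} (hA : A.IsHermitian) :
    A.charpoly.roots = Multiset.map hA.eigenvalues Finset.univ.val := by
  have hcomp : (fun i => X - C (hA.eigenvalues i)) = (fun a => X - C a) ∘ hA.eigenvalues := rfl
  rw [aux_charpoly_hermitian hA, Finset.prod_eq_multiset_prod, hcomp, ← Multiset.map_map,
    roots_multiset_prod_X_sub_C]

lemma aux_multiset_eq_of_charpoly {A B : Matrix (Fin n) (Fin n) ℝ} (hA : A.IsHermitian)
    (hB : B.IsHermitian) (h : A.charpoly = B.charpoly) :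
    Multiset.map hA.eigenvalues Finset.univ.val = Multiset.map hB.eigenvalues Finset.univ.val := by
  rw [← aux_roots_charpoly hA, ← aux_roots_charpoly hB, h]

lemma aux_charpoly_of_multiset {A B : Matrix (Fin n) (Fin n) ℝ} (hA : A.IsHermitian)
    (hB : B.IsHermitian)
    (h : Multiset.map hA.eigenvalues Finset.univ.val = Multiset.map hB.eigenvalues Finset.univ.val) :
    A.charpoly = B.charpoly := by
  have hcompA : (fun i => X - C (hA.eigenvalues i)) = (fun a => X - C a) ∘ hA.eigenvalues := rfl
  have hcompB : (fun i => X - C (hB.eigenvalues i)) = (fun a => X - C a) ∘ hB.eigenvalues := rfl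
  rw [aux_charpoly_hermitian hA, aux_charpoly_hermitian hB, Finset.prod_eq_multiset_prod,
    Finset.prod_eq_multiset_prod, hcompA, hcompB, ← Multiset.map_map, ← Multiset.map_map, h]

lemma aux_perm_of_multiset_eq {f g : Fin n → ℝ}
    (h : Multiset.map f Finset.univ.val = Multiset.map g Finset.univ.val) :
    ∃ σ : Equiv.Perm (Fin n), g = f ∘ σ := by
  have hperm : List.Perm (List.ofFn (f ∘ Tuple.sort f)) (List.ofFn (g ∘ Tuple.sort g)) := by
    refine ((Tuple.sort f).ofFn_comp_perm f).trans ?_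
    refine List.Perm.trans ?_ ((Tuple.sort g).ofFn_comp_perm g).symm
    rw [← Multiset.coe_eq_coe, ← Fin.univ_val_map, ← Fin.univ_val_map, h]
  have hs1 : (List.ofFn (f ∘ Tuple.sort f)).Pairwise (· ≤ ·) :=
    List.pairwise_ofFn.mpr fun _ _ hij => Tuple.monotone_sort f hij.le
  have hs2 : (List.ofFn (g ∘ Tuple.sort g)).Pairwise (· ≤ ·) :=
    List.pairwise_ofFn.mpr fun _ _ hij => Tuple.monotone_sort g hij.le
  have heq : f ∘ Tuple.sort f = g ∘ Tuple.sort g :=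
    List.ofFn_injective (List.Perm.eq_of_pairwise' hs1 hs2 hperm)
  refine ⟨(Tuple.sort g).symm.trans (Tuple.sort f), ?_⟩
  funext x
  have := congrFun heq ((Tuple.sort g).symm x)
  simpa using this.symm

lemma aux_eigsDesc_eq_of_perm {A B : Matrix (Fin n) (Fin n) ℝ} (hA : A.IsHermitian)
    (hB : B.IsHermitian) (σ : Equiv.Perm (Fin n))
    (h : hB.eigenvalues = hA.eigenvalues ∘ σ) : eigsDesc A = eigsDesc B := by
  unfold eigsDesc
  rw [dif_pos hA, dif_pos hB]
  funext i
  have key : hB.eigenvalues ∘ Tuple.sort hB.eigenvalues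
      = hA.eigenvalues ∘ Tuple.sort hA.eigenvalues := by
    conv_lhs => rw [h]
    exact Tuple.comp_perm_comp_sort_eq_comp_sort (σ := σ) (f := hA.eigenvalues)
  exact (congrFun key i.rev).symm

lemma aux_perm_of_eigsDesc_eq {A B : Matrix (Fin n) (Fin n) ℝ} (hA : A.IsHermitian)
    (hB : B.IsHermitian) (h : eigsDesc A = eigsDesc B) :
    ∃ σ : Equiv.Perm (Fin n), hB.eigenvalues = hA.eigenvalues ∘ σ := by
  unfold eigsDesc at h
  rw [dif_pos hA, dif_pos hB] at h
  have key : hA.eigenvalues ∘ Tuple.sort hA.eigenvalues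
      = hB.eigenvalues ∘ Tuple.sort hB.eigenvalues := by
    funext j
    have := congrFun h j.rev
    simpa using this
  refine ⟨(Tuple.sort hB.eigenvalues).symm.trans (Tuple.sort hA.eigenvalues), ?_⟩
  funext x
  have := congrFun key ((Tuple.sort hB.eigenvalues).symm x)
  simpa using this.symm

lemma aux_multiset_of_perm {f g : Fin n → ℝ} (σ : Equiv.Perm (Fin n)) (h : g = f ∘ σ) :
    Multiset.map f Finset.univ.val = Multiset.map g Finset.univ.val := by
  rw [h, ← Multiset.map_map, Multiset.map_univ_val_equiv]

lemma aux_eigsDesc_eq_of_charpoly {A B : Matrix (Fin n) (Fin n) ℝ} (hA : A.IsHermitian)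
    (hB : B.IsHermitian) (h : A.charpoly = B.charpoly) : eigsDesc A = eigsDesc B := by
  obtain ⟨σ, hσ⟩ := aux_perm_of_multiset_eq (aux_multiset_eq_of_charpoly hA hB h)
  exact aux_eigsDesc_eq_of_perm hA hB σ hσ

lemma aux_charpoly_eq_of_eigsDesc {A B : Matrix (Fin n) (Fin n) ℝ} (hA : A.IsHermitian)
    (hB : B.IsHermitian) (h : eigsDesc A = eigsDesc B) : A.charpoly = B.charpoly := by
  obtain ⟨σ, hσ⟩ := aux_perm_of_eigsDesc_eq hA hB h
  exact aux_charpoly_of_multiset hA hB (aux_multiset_of_perm σ hσ)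


lemma aux_mpow_eq {A : Matrix (Fin n) (Fin n) ℝ} (hA : A.IsHermitian) (t : ℝ) :
    mpow A t = (hA.eigenvectorUnitary : Matrix (Fin n) (Fin n) ℝ) *
      Matrix.diagonal (fun i => (hA.eigenvalues i) ^ t) *
      star (hA.eigenvectorUnitary : Matrix (Fin n) (Fin n) ℝ) :=
  dif_pos hA

lemma aux_mpow_isHermitian {A : Matrix (Fin n) (Fin n) ℝ} (hA : A.IsHermitian) (t : ℝ) :
    (mpow A t).IsHermitian := by
  rw [aux_mpow_eq hA t, Matrix.star_eq_conjTranspose]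
  exact Matrix.isHermitian_mul_mul_conjTranspose _ (Matrix.isHermitian_diagonal _)

lemma aux_mpow_transpose {A : Matrix (Fin n) (Fin n) ℝ} (hA : A.IsHermitian) (t : ℝ) :
    (mpow A t)ᵀ = mpow A t := by
  rw [← aux_star_eq_transpose, Matrix.star_eq_conjTranspose]
  exact aux_mpow_isHermitian hA t

lemma aux_mpow_mul {P : Matrix (Fin n) (Fin n) ℝ} (hP : P.PosDef) (s t : ℝ) :
    mpow P s * mpow P t = mpow P (s + t) := by
  have hH : P.IsHermitian := hP.1
  have h2 : star (hH.eigenvectorUnitary : Matrix (Fin n) (Fin n) ℝ) *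
      (hH.eigenvectorUnitary : Matrix (Fin n) (Fin n) ℝ) = 1 := aux_star_mul_U hH
  have hD : Matrix.diagonal (fun i => hH.eigenvalues i ^ s) *
      Matrix.diagonal (fun i => hH.eigenvalues i ^ t)
      = Matrix.diagonal (fun i => hH.eigenvalues i ^ (s + t)) := by
    have hfun : (fun i => hH.eigenvalues i ^ s * hH.eigenvalues i ^ t)
        = fun i => hH.eigenvalues i ^ (s + t) :=
      funext fun i => (Real.rpow_add (hP.eigenvalues_pos i) s t).symm
    rw [Matrix.diagonal_mul_diagonal, hfun]
  rw [aux_mpow_eq hH s, aux_mpow_eq hH t, aux_mpow_eq hH (s + t)]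
  set U : Matrix (Fin n) (Fin n) ℝ := (hH.eigenvectorUnitary : Matrix (Fin n) (Fin n) ℝ)
  set D1 := Matrix.diagonal (fun i => hH.eigenvalues i ^ s)
  set D2 := Matrix.diagonal (fun i => hH.eigenvalues i ^ t)
  have hassoc : (U * D1 * star U) * (U * D2 * star U)
      = U * (D1 * ((star U * U) * D2)) * star U := by
    simp only [mul_assoc]
  rw [hassoc, h2, one_mul, hD]

lemma aux_mpow_zero {A : Matrix (Fin n) (Fin n) ℝ} (hA : A.IsHermitian) : mpow A 0 = 1 := by
  have h : (fun i => hA.eigenvalues i ^ (0:ℝ)) = fun _ => (1:ℝ) :=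
    funext fun i => Real.rpow_zero _
  rw [aux_mpow_eq hA 0, h, Matrix.diagonal_one, mul_one, aux_U_mul_star hA]

lemma aux_mpow_one {A : Matrix (Fin n) (Fin n) ℝ} (hA : A.IsHermitian) : mpow A 1 = A := by
  have h : (fun i => hA.eigenvalues i ^ (1:ℝ)) = hA.eigenvalues :=
    funext fun i => Real.rpow_one _
  rw [aux_mpow_eq hA 1, h]
  exact (aux_spectral hA).symm

lemma aux_half_half {p : Matrix (Fin n) (Fin n) ℝ} (hp : p.PosDef) :
    mpow p (1/2) * mpow p (1/2) = p := by
  rw [aux_mpow_mul hp]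
  norm_num [aux_mpow_one hp.1]

lemma aux_neghalf_half {p : Matrix (Fin n) (Fin n) ℝ} (hp : p.PosDef) :
    mpow p (-(1/2)) * mpow p (1/2) = 1 := by
  rw [aux_mpow_mul hp]
  norm_num [aux_mpow_zero hp.1]

lemma aux_half_neghalf {p : Matrix (Fin n) (Fin n) ℝ} (hp : p.PosDef) :
    mpow p (1/2) * mpow p (-(1/2)) = 1 := by
  rw [aux_mpow_mul hp]
  norm_num [aux_mpow_zero hp.1]

lemma aux_neghalf_neghalf {p : Matrix (Fin n) (Fin n) ℝ} (hp : p.PosDef) :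
    mpow p (-(1/2)) * mpow p (-(1/2)) = mpow p (-1) := by
  rw [aux_mpow_mul hp]
  norm_num

lemma aux_mpow_half_unit {p : Matrix (Fin n) (Fin n) ℝ} (hp : p.PosDef) :
    IsUnit (mpow p (1/2)) :=
  aux_unit (aux_half_neghalf hp) (aux_neghalf_half hp)

lemma aux_mpow_neghalf_unit {p : Matrix (Fin n) (Fin n) ℝ} (hp : p.PosDef) :
    IsUnit (mpow p (-(1/2))) :=
  aux_unit (aux_neghalf_half hp) (aux_half_neghalf hp)

lemma aux_mpow_neg_one {p : Matrix (Fin n) (Fin n) ℝ} (hp : p.PosDef) :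
    mpow p (-1) = p⁻¹ := by
  have h : mpow p (-1) * p = 1 := by
    have hmm := aux_mpow_mul hp (-1) 1
    rw [aux_mpow_one hp.1] at hmm
    have h2 : (-1 : ℝ) + 1 = 0 := by norm_num
    rw [h2, aux_mpow_zero hp.1] at hmm
    exact hmm
  exact (Matrix.inv_eq_left_inv h).symm

lemma aux_posDef_transpose_mul_self {h : Matrix (Fin n) (Fin n) ℝ} (hu : IsUnit h) :
    (hᵀ * h).PosDef := by
  have hinj : Function.Injective h.mulVec := Matrix.mulVec_injective_iff_isUnit.2 hu
  refine Matrix.posDef_iff_dotProduct_mulVec.mpr ⟨?_, ?_⟩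
  · have := Matrix.isHermitian_conjTranspose_mul_self h
    rwa [Matrix.conjTranspose_eq_transpose_of_trivial] at this
  · intro x hx
    have hy : h *ᵥ x ≠ 0 := by
      intro hc
      exact hx (hinj (by simpa using hc))
    have key : dotProduct (star x) ((hᵀ * h) *ᵥ x) = dotProduct (h *ᵥ x) (h *ᵥ x) := by
      rw [← Matrix.mulVec_mulVec, Matrix.dotProduct_mulVec]
      congr 1
      have : star (h *ᵥ x) = star x ᵥ* hᴴ := Matrix.star_mulVec h x
      rw [Matrix.conjTranspose_eq_transpose_of_trivial] at this
      simpa using this.symm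
    rw [key]
    have h0 : (0:ℝ) ≤ dotProduct (h *ᵥ x) (h *ᵥ x) :=
      Finset.sum_nonneg fun i _ => mul_self_nonneg _
    rcases h0.lt_or_eq with hlt | heq
    · exact hlt
    · exact absurd (dotProduct_self_eq_zero.mp heq.symm) hy



lemma aux_eigsDesc_pos {B : Matrix (Fin n) (Fin n) ℝ} (hB : B.PosDef) (i : Fin n) :
    0 < eigsDesc B i := by
  unfold eigsDesc
  rw [dif_pos hB.1]
  exact hB.eigenvalues_pos _

lemma aux_Q_facts (σ : Equiv.Perm (Fin n)) (d : Fin n → ℝ) :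
    ∃ Q : Matrix (Fin n) (Fin n) ℝ,
      Q * Qᵀ = 1 ∧ Qᵀ * Q = 1 ∧ Q * Matrix.diagonal d * Qᵀ = Matrix.diagonal (d ∘ σ) := by
  have hQt : (σ.toPEquiv.toMatrix : Matrix (Fin n) (Fin n) ℝ)ᵀ = σ.symm.toPEquiv.toMatrix := by
    rw [Equiv.toPEquiv_symm, PEquiv.toMatrix_symm]
  refine ⟨σ.toPEquiv.toMatrix, ?_, ?_, ?_⟩
  · rw [hQt, ← PEquiv.toMatrix_trans, ← Equiv.toPEquiv_trans, Equiv.self_trans_symm,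
      Equiv.toPEquiv_refl, PEquiv.toMatrix_refl]
  · rw [hQt, ← PEquiv.toMatrix_trans, ← Equiv.toPEquiv_trans, Equiv.symm_trans_self,
      Equiv.toPEquiv_refl, PEquiv.toMatrix_refl]
  · rw [hQt, PEquiv.toMatrix_toPEquiv_mul, PEquiv.mul_toMatrix_toPEquiv, Equiv.symm_symm,
      Matrix.submatrix_submatrix, Function.comp_id, Function.id_comp,
      Matrix.submatrix_diagonal d σ σ.injective]

lemma aux_orthogonal_conj {A B : Matrix (Fin n) (Fin n) ℝ} (hA : A.IsHermitian)
    (hB : B.IsHermitian) (σ : Equiv.Perm (Fin n))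
    (h : hB.eigenvalues = hA.eigenvalues ∘ σ) :
    ∃ u : Matrix (Fin n) (Fin n) ℝ, u * star u = 1 ∧ star u * u = 1 ∧ u * A * star u = B := by
  obtain ⟨Q, hQ1, hQ2, hQd⟩ := aux_Q_facts σ hA.eigenvalues
  set U1 : Matrix (Fin n) (Fin n) ℝ := (hA.eigenvectorUnitary : Matrix (Fin n) (Fin n) ℝ) with hU1
  set U2 : Matrix (Fin n) (Fin n) ℝ := (hB.eigenvectorUnitary : Matrix (Fin n) (Fin n) ℝ) with hU2
  have cU1 : ∀ X : Matrix (Fin n) (Fin n) ℝ, star U1 * (U1 * X) = X := fun X => by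
    rw [← mul_assoc, aux_star_mul_U hA, one_mul]
  have cU2 : ∀ X : Matrix (Fin n) (Fin n) ℝ, star U2 * (U2 * X) = X := fun X => by
    rw [← mul_assoc, aux_star_mul_U hB, one_mul]
  have cQ : ∀ X : Matrix (Fin n) (Fin n) ℝ, Q * (Qᵀ * X) = X := fun X => by
    rw [← mul_assoc, hQ1, one_mul]
  have cQ' : ∀ X : Matrix (Fin n) (Fin n) ℝ, Qᵀ * (Q * X) = X := fun X => by
    rw [← mul_assoc, hQ2, one_mul]
  have hsu : star (U2 * Q * star U1) = U1 * (Qᵀ * star U2) := by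
    rw [Matrix.star_mul, Matrix.star_mul, star_star, aux_star_eq_transpose Q]
  refine ⟨U2 * Q * star U1, ?_, ?_, ?_⟩
  · rw [hsu]
    simp only [mul_assoc]
    rw [cU1, cQ, aux_U_mul_star hB]
  · rw [hsu]
    simp only [mul_assoc]
    rw [cU2, cQ', aux_U_mul_star hA]
  · rw [hsu]
    calc U2 * Q * star U1 * A * (U1 * (Qᵀ * star U2))
        = U2 * Q * star U1 * (U1 * Matrix.diagonal hA.eigenvalues * star U1) *
            (U1 * (Qᵀ * star U2)) := by rw [← aux_spectral hA]
      _ = U2 * (Q * Matrix.diagonal hA.eigenvalues * Qᵀ * star U2) := by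
            simp only [mul_assoc]
            rw [cU1, cU1]
      _ = U2 * (Matrix.diagonal (hA.eigenvalues ∘ σ) * star U2) := by rw [hQd]
      _ = U2 * (Matrix.diagonal hB.eigenvalues * star U2) := by rw [← h]
      _ = B := by rw [← mul_assoc]; exact (aux_spectral hB).symm

lemma aux_B_posDef {p q : Matrix (Fin n) (Fin n) ℝ} (hp : p.PosDef) (hq : q.PosDef) :
    ((mpow p (-(1/2)) * mpow q (1/2))ᵀ * (mpow p (-(1/2)) * mpow q (1/2))).PosDef :=
  aux_posDef_transpose_mul_self ((aux_mpow_neghalf_unit hp).mul (aux_mpow_half_unit hq))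

lemma aux_m_posDef {p q : Matrix (Fin n) (Fin n) ℝ} (hp : p.PosDef) (hq : q.PosDef) :
    (mpow p (-(1/2)) * q * mpow p (-(1/2))).PosDef := by
  have key : mpow p (-(1/2)) * q * mpow p (-(1/2))
      = (mpow q (1/2) * mpow p (-(1/2)))ᵀ * (mpow q (1/2) * mpow p (-(1/2))) := by
    rw [Matrix.transpose_mul, aux_mpow_transpose hq.1, aux_mpow_transpose hp.1]
    calc mpow p (-(1/2)) * q * mpow p (-(1/2))
        = mpow p (-(1/2)) * (mpow q (1/2) * mpow q (1/2)) * mpow p (-(1/2)) := by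
          rw [aux_half_half hq]
      _ = mpow p (-(1/2)) * mpow q (1/2) * (mpow q (1/2) * mpow p (-(1/2))) := by
          simp only [mul_assoc]
  rw [key]
  exact aux_posDef_transpose_mul_self ((aux_mpow_half_unit hq).mul (aux_mpow_neghalf_unit hp))

lemma aux_charpoly_m {p q : Matrix (Fin n) (Fin n) ℝ} (hp : p.PosDef) (hq : q.PosDef) :
    (mpow p (-(1/2)) * q * mpow p (-(1/2))).charpoly = (p⁻¹ * q).charpoly := by
  have h1 : mpow p (-(1/2)) * q * mpow p (-(1/2))
      = mpow p (-(1/2)) * (q * mpow p (-(1/2))) := by rw [mul_assoc]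
  rw [h1, aux_charpoly_mul_comm _ (aux_mpow_neghalf_unit hp)]
  have h2 : q * mpow p (-(1/2)) * mpow p (-(1/2)) = q * p⁻¹ := by
    rw [mul_assoc, aux_neghalf_neghalf hp, aux_mpow_neg_one hp]
  rw [h2, aux_charpoly_mul_comm _ hq.isUnit]

lemma aux_charpoly_B {p q : Matrix (Fin n) (Fin n) ℝ} (hp : p.PosDef) (hq : q.PosDef) :
    ((mpow p (-(1/2)) * mpow q (1/2))ᵀ * (mpow p (-(1/2)) * mpow q (1/2))).charpoly
      = (p⁻¹ * q).charpoly := by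
  rw [Matrix.transpose_mul, aux_mpow_transpose hq.1, aux_mpow_transpose hp.1]
  rw [aux_charpoly_mul_comm (mpow p (-(1/2)) * mpow q (1/2))
    ((aux_mpow_half_unit hq).mul (aux_mpow_neghalf_unit hp))]
  have h3 : mpow p (-(1/2)) * mpow q (1/2) * (mpow q (1/2) * mpow p (-(1/2)))
      = mpow p (-(1/2)) * q * mpow p (-(1/2)) := by
    calc mpow p (-(1/2)) * mpow q (1/2) * (mpow q (1/2) * mpow p (-(1/2)))
        = mpow p (-(1/2)) * (mpow q (1/2) * mpow q (1/2)) * mpow p (-(1/2)) := by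
          simp only [mul_assoc]
      _ = mpow p (-(1/2)) * q * mpow p (-(1/2)) := by rw [aux_half_half hq]
  rw [h3, aux_charpoly_m hp hq]

lemma aux_vecd_eq {p q : Matrix (Fin n) (Fin n) ℝ} (hp : p.PosDef) (hq : q.PosDef) :
    vecd p q = fun i => Real.logb 2 (eigsDesc
      ((mpow p (-(1/2)) * mpow q (1/2))ᵀ * (mpow p (-(1/2)) * mpow q (1/2))) i) := by
  funext i
  have he := aux_eigsDesc_pos (aux_B_posDef hp hq) i
  unfold vecd sigmaVec svals
  rw [Real.logb, Real.logb, Real.log_sqrt he.le]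
  ring

end Aux

theorem statement6 {n : ℕ} (p₁ q₁ p₂ q₂ : Matrix (Fin n) (Fin n) ℝ)
    (hp₁ : p₁.PosDef) (hq₁ : q₁.PosDef) (hp₂ : p₂.PosDef) (hq₂ : q₂.PosDef) :
    vecd p₁ q₁ = vecd p₂ q₂ ↔
      ∃ g : Matrix (Fin n) (Fin n) ℝ, IsUnit g ∧ g * p₁ * gᵀ = p₂ ∧ g * q₁ * gᵀ = q₂ := by
  constructor
  · intro hv
    have hB1 := aux_B_posDef hp₁ hq₁
    have hB2 := aux_B_posDef hp₂ hq₂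
    have hm1 := aux_m_posDef hp₁ hq₁
    have hm2 := aux_m_posDef hp₂ hq₂
    rw [aux_vecd_eq hp₁ hq₁, aux_vecd_eq hp₂ hq₂] at hv
    have heig : eigsDesc ((mpow p₁ (-(1/2)) * mpow q₁ (1/2))ᵀ * (mpow p₁ (-(1/2)) * mpow q₁ (1/2)))
        = eigsDesc ((mpow p₂ (-(1/2)) * mpow q₂ (1/2))ᵀ * (mpow p₂ (-(1/2)) * mpow q₂ (1/2))) := by
      funext i
      have h1 : Real.logb 2 (eigsDesc ((mpow p₁ (-(1/2)) * mpow q₁ (1/2))ᵀ *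
            (mpow p₁ (-(1/2)) * mpow q₁ (1/2))) i)
          = Real.logb 2 (eigsDesc ((mpow p₂ (-(1/2)) * mpow q₂ (1/2))ᵀ *
            (mpow p₂ (-(1/2)) * mpow q₂ (1/2))) i) := congrFun hv i
      have e1 := aux_eigsDesc_pos hB1 i
      have e2 := aux_eigsDesc_pos hB2 i
      calc eigsDesc ((mpow p₁ (-(1/2)) * mpow q₁ (1/2))ᵀ * (mpow p₁ (-(1/2)) * mpow q₁ (1/2))) i
          = (2:ℝ) ^ Real.logb 2 (eigsDesc ((mpow p₁ (-(1/2)) * mpow q₁ (1/2))ᵀ *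
              (mpow p₁ (-(1/2)) * mpow q₁ (1/2))) i) :=
            (Real.rpow_logb (by norm_num) (by norm_num) e1).symm
        _ = (2:ℝ) ^ Real.logb 2 (eigsDesc ((mpow p₂ (-(1/2)) * mpow q₂ (1/2))ᵀ *
              (mpow p₂ (-(1/2)) * mpow q₂ (1/2))) i) := by rw [h1]
        _ = eigsDesc ((mpow p₂ (-(1/2)) * mpow q₂ (1/2))ᵀ *
              (mpow p₂ (-(1/2)) * mpow q₂ (1/2))) i :=
            Real.rpow_logb (by norm_num) (by norm_num) e2
    have hcB := aux_charpoly_eq_of_eigsDesc hB1.1 hB2.1 heig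
    have hcm : (mpow p₁ (-(1/2)) * q₁ * mpow p₁ (-(1/2))).charpoly
        = (mpow p₂ (-(1/2)) * q₂ * mpow p₂ (-(1/2))).charpoly := by
      rw [aux_charpoly_m hp₁ hq₁, aux_charpoly_m hp₂ hq₂,
        ← aux_charpoly_B hp₁ hq₁, ← aux_charpoly_B hp₂ hq₂]
      exact hcB
    obtain ⟨σ, hσ⟩ := aux_perm_of_multiset_eq (aux_multiset_eq_of_charpoly hm1.1 hm2.1 hcm)
    obtain ⟨u, hu1, hu2, hum⟩ := aux_orthogonal_conj hm1.1 hm2.1 σ hσ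
    have hgT : (mpow p₂ (1/2) * u * mpow p₁ (-(1/2)))ᵀ
        = mpow p₁ (-(1/2)) * (star u * mpow p₂ (1/2)) := by
      rw [Matrix.transpose_mul, Matrix.transpose_mul, aux_mpow_transpose hp₁.1,
        aux_mpow_transpose hp₂.1, ← aux_star_eq_transpose u]
    refine ⟨mpow p₂ (1/2) * u * mpow p₁ (-(1/2)),
      ((aux_mpow_half_unit hp₂).mul (aux_unit hu1 hu2)).mul (aux_mpow_neghalf_unit hp₁), ?_, ?_⟩
    · rw [hgT]
      have hrpr : mpow p₁ (-(1/2)) * p₁ * mpow p₁ (-(1/2)) = 1 := by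
        have step : mpow p₁ (-(1/2)) * p₁ * mpow p₁ (-(1/2))
            = mpow p₁ (-(1/2)) * (mpow p₁ (1/2) * mpow p₁ (1/2)) * mpow p₁ (-(1/2)) := by
          rw [aux_half_half hp₁]
        rw [step]
        calc mpow p₁ (-(1/2)) * (mpow p₁ (1/2) * mpow p₁ (1/2)) * mpow p₁ (-(1/2))
            = (mpow p₁ (-(1/2)) * mpow p₁ (1/2)) * (mpow p₁ (1/2) * mpow p₁ (-(1/2))) := by
              simp only [mul_assoc]
          _ = 1 := by rw [aux_neghalf_half hp₁, aux_half_neghalf hp₁, one_mul]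
      calc mpow p₂ (1/2) * u * mpow p₁ (-(1/2)) * p₁ *
            (mpow p₁ (-(1/2)) * (star u * mpow p₂ (1/2)))
          = mpow p₂ (1/2) * (u * ((mpow p₁ (-(1/2)) * p₁ * mpow p₁ (-(1/2))) *
              (star u * mpow p₂ (1/2)))) := by simp only [mul_assoc]
        _ = mpow p₂ (1/2) * (u * (star u * mpow p₂ (1/2))) := by rw [hrpr, one_mul]
        _ = mpow p₂ (1/2) * ((u * star u) * mpow p₂ (1/2)) := by simp only [mul_assoc]
        _ = mpow p₂ (1/2) * mpow p₂ (1/2) := by rw [hu1, one_mul]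
        _ = p₂ := aux_half_half hp₂
    · rw [hgT]
      calc mpow p₂ (1/2) * u * mpow p₁ (-(1/2)) * q₁ *
            (mpow p₁ (-(1/2)) * (star u * mpow p₂ (1/2)))
          = mpow p₂ (1/2) * ((u * (mpow p₁ (-(1/2)) * q₁ * mpow p₁ (-(1/2))) * star u) *
              mpow p₂ (1/2)) := by simp only [mul_assoc]
        _ = mpow p₂ (1/2) * ((mpow p₂ (-(1/2)) * q₂ * mpow p₂ (-(1/2))) * mpow p₂ (1/2)) := by
              rw [hum]
        _ = (mpow p₂ (1/2) * mpow p₂ (-(1/2))) * (q₂ * (mpow p₂ (-(1/2)) * mpow p₂ (1/2))) := by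
              simp only [mul_assoc]
        _ = q₂ := by rw [aux_half_neghalf hp₂, aux_neghalf_half hp₂, one_mul, mul_one]
  · rintro ⟨g, hg, hgp, hgq⟩
    have hdet := (Matrix.isUnit_iff_isUnit_det g).mp hg
    have hdetT : IsUnit gᵀ.det := by rwa [Matrix.det_transpose]
    have hTinv1 : gᵀ⁻¹ * gᵀ = 1 := Matrix.nonsing_inv_mul gᵀ hdetT
    have hTinv2 : gᵀ * gᵀ⁻¹ = 1 := Matrix.mul_nonsing_inv gᵀ hdetT
    have hinvinv : gᵀ⁻¹⁻¹ = gᵀ := Matrix.nonsing_inv_nonsing_inv gᵀ hdetT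
    have hkey : p₂⁻¹ * q₂ = gᵀ⁻¹ * (p₁⁻¹ * q₁) * gᵀ⁻¹⁻¹ := by
      rw [hinvinv, ← hgp, ← hgq, Matrix.mul_inv_rev]
      have hc : g⁻¹ * (g * (q₁ * gᵀ)) = q₁ * gᵀ := by
        rw [← mul_assoc, Matrix.nonsing_inv_mul g hdet, one_mul]
      calc gᵀ⁻¹ * (g * p₁)⁻¹ * (g * q₁ * gᵀ)
          = gᵀ⁻¹ * (p₁⁻¹ * g⁻¹) * (g * q₁ * gᵀ) := by rw [Matrix.mul_inv_rev]
        _ = gᵀ⁻¹ * (p₁⁻¹ * (g⁻¹ * (g * (q₁ * gᵀ)))) := by simp only [mul_assoc]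
        _ = gᵀ⁻¹ * (p₁⁻¹ * (q₁ * gᵀ)) := by rw [hc]
        _ = gᵀ⁻¹ * (p₁⁻¹ * q₁) * gᵀ := by simp only [mul_assoc]
    have hcp : (p₂⁻¹ * q₂).charpoly = (p₁⁻¹ * q₁).charpoly := by
      rw [hkey]
      exact aux_charpoly_conj _ (aux_unit hTinv1 hTinv2)
    have hB1 := aux_B_posDef hp₁ hq₁
    have hB2 := aux_B_posDef hp₂ hq₂
    have hcB : ((mpow p₁ (-(1/2)) * mpow q₁ (1/2))ᵀ * (mpow p₁ (-(1/2)) * mpow q₁ (1/2))).charpoly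
        = ((mpow p₂ (-(1/2)) * mpow q₂ (1/2))ᵀ * (mpow p₂ (-(1/2)) * mpow q₂ (1/2))).charpoly := by
      rw [aux_charpoly_B hp₁ hq₁, aux_charpoly_B hp₂ hq₂]
      exact hcp.symm
    have heig := aux_eigsDesc_eq_of_charpoly hB1.1 hB2.1 hcB
    rw [aux_vecd_eq hp₁ hq₁, aux_vecd_eq hp₂ hq₂, heig]
end
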